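/- Let D be an integral domain, ℓ a length function on D, P' ⊆ P prime ideals of D, and Q a P'-primary ideal. Then ℓ(D/Q) = ℓ(D_P/QD_P), where D_P/QD_P is regarded as a D-module via the localization map. -/

import Mathlib

open scoped ENNReal

universe u

set_option maxHeartbeats 1000000

structure LengthFunction (R : Type u) [CommRing R] where
  toFun : ∀ (M : Type u) [AddCommGroup M] [Module R M], ℝ≥0∞
  zero' : ∀ (M : Type u) [AddCommGroup M] [Module R M], Subsingleton M → toFun M = 0
  additive : ∀ (M₁ M₂ M₃ : Type u) [AddCommGroup M₁] [Module R M₁]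
      [AddCommGroup M₂] [Module R M₂] [AddCommGroup M₃] [Module R M₃]
      (f : M₁ →ₗ[R] M₂) (g : M₂ →ₗ[R] M₃),
      Function.Injective f → Function.Surjective g →
      LinearMap.range f = LinearMap.ker g →
      toFun M₂ = toFun M₁ + toFun M₃
  upperContinuous : ∀ (M : Type u) [AddCommGroup M] [Module R M],
      toFun M = ⨆ (N : Submodule R M) (_ : N.FG), toFun N

namespace LengthFunction

variable {R : Type u} [CommRing R] (ℓ : LengthFunction R)

lemma eq_add_quot {M : Type u} [AddCommGroup M] [Module R M] (N : Submodule R M) :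
    ℓ.toFun M = ℓ.toFun N + ℓ.toFun (M ⧸ N) := by
  refine ℓ.additive N M (M ⧸ N) N.subtype N.mkQ N.injective_subtype
    (Submodule.mkQ_surjective N) ?_
  rw [Submodule.range_subtype, Submodule.ker_mkQ]

lemma congr_equiv {M N : Type u} [AddCommGroup M] [Module R M] [AddCommGroup N] [Module R N]
    (e : M ≃ₗ[R] N) : ℓ.toFun M = ℓ.toFun N := by
  have h := ℓ.additive M N (N ⧸ (⊤ : Submodule R N)) e.toLinearMap (⊤ : Submodule R N).mkQ
    e.injective (Submodule.mkQ_surjective _) (by rw [Submodule.ker_mkQ]; exact LinearMap.range_eq_top.2 e.surjective)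
  rw [h, ℓ.zero' _ (Submodule.Quotient.subsingleton_iff.2 rfl), add_zero]

lemma le_of_injective {M N : Type u} [AddCommGroup M] [Module R M] [AddCommGroup N] [Module R N]
    (f : M →ₗ[R] N) (hf : Function.Injective f) : ℓ.toFun M ≤ ℓ.toFun N := by
  rw [ℓ.eq_add_quot (LinearMap.range f), ← ℓ.congr_equiv (LinearEquiv.ofInjective f hf)]
  exact le_self_add

end LengthFunction

theorem length_primary_localize {D : Type u} [CommRing D] [IsDomain D] (ℓ : LengthFunction D)
    (P' P : Ideal D) (hP' : P'.IsPrime) [P.IsPrime] (hle : P' ≤ P)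
    (Q : Ideal D) (hQ : Q.IsPrimary) (hrad : Q.radical = P') :
    ℓ.toFun (D ⧸ Q) =
      ℓ.toFun (Localization.AtPrime P ⧸ Q.map (algebraMap D (Localization.AtPrime P))) := by
  classical
  set Dp := Localization.AtPrime P
  set Qe : Ideal Dp := Q.map (algebraMap D Dp) with hQe
  -- the canonical map D⧸Q → Dp⧸Qe
  have hinj₀ : Function.Injective (algebraMap D Dp) :=
    IsLocalization.injective Dp P.primeCompl_le_nonZeroDivisors
  -- saturation: s ∉ P, s*x ∈ Q → x ∈ Q
  have hsat : ∀ s ∈ P.primeCompl, ∀ x, s * x ∈ Q → x ∈ Q := by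
    intro s hs x hx
    have hx' : x * s ∈ Q := by rwa [mul_comm]
    rcases (Ideal.isPrimary_iff.mp hQ).2 hx' with h | h
    · exact h
    · exact absurd (hle (hrad ▸ h)) hs
  -- the canonical map  D⧸Q → Dp⧸Qe
  let g : D →ₗ[D] (Dp ⧸ Qe) :=
    (LinearMap.restrictScalars D Qe.mkQ).comp (Algebra.linearMap D Dp)
  have hg : ∀ x : D, g x = Submodule.Quotient.mk (algebraMap D Dp x) := fun x => rfl
  have hQle : Q ≤ LinearMap.ker g := by
    intro x hx
    rw [LinearMap.mem_ker, hg, Submodule.Quotient.mk_eq_zero]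
    exact Ideal.mem_map_of_mem _ hx
  let φ : (D ⧸ Q) →ₗ[D] (Dp ⧸ Qe) := Submodule.liftQ Q g hQle
  have hφmk : ∀ x : D, φ (Submodule.Quotient.mk x) = Submodule.Quotient.mk (algebraMap D Dp x) :=
    fun x => rfl
  have hφinj : Function.Injective φ := by
    rw [← LinearMap.ker_eq_bot]
    apply Submodule.ker_liftQ_eq_bot
    intro x hx
    rw [LinearMap.mem_ker, hg, Submodule.Quotient.mk_eq_zero] at hx
    obtain ⟨⟨a, s⟩, h⟩ := (IsLocalization.mem_map_algebraMap_iff P.primeCompl Dp).1 hx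
    rw [← map_mul] at h
    have hxs : x * (s : D) ∈ Q := hinj₀ h ▸ a.2
    exact hsat s s.2 x (by rwa [mul_comm])
  -- main decomposition
  have hmain : ℓ.toFun (Dp ⧸ Qe) = ℓ.toFun (D ⧸ Q) + ℓ.toFun ((Dp ⧸ Qe) ⧸ LinearMap.range φ) := by
    rw [ℓ.eq_add_quot (LinearMap.range φ), ℓ.congr_equiv (LinearEquiv.ofInjective φ hφinj)]
  by_cases hfin : ℓ.toFun (D ⧸ Q) = ⊤
  · rw [hmain, hfin, top_add]
  -- the cokernel has length zero
  set C := (Dp ⧸ Qe) ⧸ LinearMap.range φ with hC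
  let π : (Dp ⧸ Qe) →ₗ[D] C := (LinearMap.range φ).mkQ
  have hcoker : ℓ.toFun C = 0 := by
    rw [ℓ.upperContinuous C]
    refine le_antisymm (iSup₂_le fun N hN => ?_) (zero_le)
    -- choose representatives of generators of N
    obtain ⟨T, hT⟩ := hN
    have hrep : ∀ t : T, ∃ (x : D) (s : P.primeCompl),
        π (Submodule.Quotient.mk (IsLocalization.mk' Dp x s)) = (t : C) := by
      intro t
      obtain ⟨z, hz⟩ := Submodule.mkQ_surjective (LinearMap.range φ) (t : C)
      obtain ⟨w, hw⟩ := Submodule.mkQ_surjective Qe z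
      obtain ⟨⟨x, s⟩, (hxs : IsLocalization.mk' Dp x s = w)⟩ := IsLocalization.mk'_surjective P.primeCompl w
      refine ⟨x, s, ?_⟩
      rw [hxs, show (Submodule.Quotient.mk w : Dp ⧸ Qe) = Submodule.mkQ Qe w from rfl, hw]
      exact hz
    choose xg sg hg' using hrep
    set s₀ : P.primeCompl := ∏ t : T, sg t with hs₀
    have hu : IsUnit (algebraMap D Dp (s₀ : D)) := IsLocalization.map_units Dp s₀
    set u : Dpˣ := hu.unit with huu
    have huspec : (u : Dp) = algebraMap D Dp (s₀ : D) := rfl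
    -- ψ x = u⁻¹ • φ x
    let ψ : (D ⧸ Q) →ₗ[D] (Dp ⧸ Qe) := ((u⁻¹ : Dpˣ) : Dp) • φ
    have hψ : ∀ x, ψ x = ((u⁻¹ : Dpˣ) : Dp) • φ x := fun x => rfl
    have hψinj : Function.Injective ψ := by
      intro a b hab
      apply hφinj
      have := congrArg (fun z => ((u : Dpˣ) : Dp) • z) hab
      simpa [hψ, smul_smul, Units.mul_inv] using this
    -- key: u • φ y = φ (s₀ • y)
    have hkey : ∀ y : D ⧸ Q, ((u : Dpˣ) : Dp) • φ y = φ ((s₀ : D) • y) := by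
      intro y
      obtain ⟨a, rfl⟩ := Submodule.Quotient.mk_surjective Q y
      rw [← Submodule.Quotient.mk_smul, hφmk, hφmk, huspec, ← Submodule.Quotient.mk_smul,
        smul_eq_mul, smul_eq_mul, map_mul]
    -- the submodule T_s
    set Ts := LinearMap.range (π ∘ₗ ψ) with hTs
    have hNle : N ≤ Ts := by
      rw [← hT]
      rw [Submodule.span_le]
      intro c hc
      set t : T := ⟨c, hc⟩ with ht
      set rest : P.primeCompl := ∏ t' ∈ Finset.univ.erase t, sg t' with hrest
      have hprod : sg t * rest = s₀ := Finset.mul_prod_erase Finset.univ sg (Finset.mem_univ t)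
      refine ⟨Submodule.Quotient.mk ((rest : D) * xg t), ?_⟩
      have hstep : ψ (Submodule.Quotient.mk ((rest : D) * xg t)) =
          Submodule.Quotient.mk (IsLocalization.mk' Dp (xg t) (sg t)) := by
        have h1 : φ (Submodule.Quotient.mk ((rest : D) * xg t)) =
            ((u : Dpˣ) : Dp) • Submodule.Quotient.mk (IsLocalization.mk' Dp (xg t) (sg t)) := by
          rw [hφmk, huspec, ← Submodule.Quotient.mk_smul, smul_eq_mul]
          congr 1
          rw [map_mul, ← hprod, Submonoid.coe_mul, map_mul,
            mul_comm (algebraMap D Dp (sg t : D)) (algebraMap D Dp (rest : D)), mul_assoc,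
            IsLocalization.mk'_spec']
        rw [hψ, h1, smul_smul, Units.inv_mul, one_smul]
      show (π ∘ₗ ψ) _ = c
      rw [LinearMap.comp_apply, hstep]
      exact hg' t
    -- multiplication by s₀ on D⧸Q
    let μ : (D ⧸ Q) →ₗ[D] (D ⧸ Q) := (s₀ : D) • LinearMap.id
    have hμ : ∀ y, μ y = (s₀ : D) • y := fun y => rfl
    have hμinj : Function.Injective μ := by
      rw [← LinearMap.ker_eq_bot, eq_bot_iff]
      intro y hy
      rw [LinearMap.mem_ker, hμ] at hy
      obtain ⟨a, rfl⟩ := Submodule.Quotient.mk_surjective Q y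
      rw [← Submodule.Quotient.mk_smul, Submodule.Quotient.mk_eq_zero] at hy
      rw [Submodule.mem_bot, Submodule.Quotient.mk_eq_zero]
      exact hsat s₀ s₀.2 a hy
    have hker : LinearMap.ker (π ∘ₗ ψ) = LinearMap.range μ := by
      ext x
      rw [LinearMap.mem_ker, LinearMap.comp_apply]
      show (LinearMap.range φ).mkQ (ψ x) = 0 ↔ _
      rw [Submodule.mkQ_apply, Submodule.Quotient.mk_eq_zero]
      constructor
      · rintro ⟨y, hy⟩
        refine ⟨y, ?_⟩
        rw [hμ]
        apply hφinj
        rw [← hkey]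
        rw [hψ] at hy
        rw [hy, smul_smul, Units.mul_inv, one_smul]
      · rintro ⟨y, rfl⟩
        refine ⟨y, ?_⟩
        rw [hψ, hμ, ← hkey, smul_smul, Units.inv_mul, one_smul]
    -- length of the quotient by range μ is zero
    have hq0 : ℓ.toFun ((D ⧸ Q) ⧸ LinearMap.range μ) = 0 := by
      have h2 := ℓ.eq_add_quot (LinearMap.range μ)
      rw [← ℓ.congr_equiv (LinearEquiv.ofInjective μ hμinj)] at h2
      have h3 : ℓ.toFun (D ⧸ Q) + 0 = ℓ.toFun (D ⧸ Q) +
          ℓ.toFun ((D ⧸ Q) ⧸ LinearMap.range μ) := by rw [add_zero]; exact h2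
      exact ((ENNReal.add_right_inj hfin).mp h3).symm
    have hTs0 : ℓ.toFun Ts = 0 := by
      rw [← ℓ.congr_equiv (LinearMap.quotKerEquivRange (π ∘ₗ ψ)), hker]
      exact hq0
    calc ℓ.toFun N ≤ ℓ.toFun Ts :=
          ℓ.le_of_injective (Submodule.inclusion hNle) (Submodule.inclusion_injective hNle)
      _ = 0 := hTs0
  rw [hmain, hcoker, add_zero]
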